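/- Let a, b, c, d be nonnegative integers with b, d positive, gcd(a,b) = 1, gcd(c,d) = 1, and bc − ad = 2^k for some nonnegative integer k. Then (i) every rational number x with a/b ≤ x ≤ c/d appears in the tree T(a/b, c/d), and (ii) there exists L such that for all n ≥ L, every pair of consecutive entries p, q of S(n)(a/b, c/d) has cross-determinant 1, i.e. den(p)·num(q) − num(p)·den(q) = 1. -/

import Mathlib

/-- The mediant of two rationals `p` and `q`: `(num p + num q) / (den p + den q)`. -/
def mediant (p q : ℚ) : ℚ := ((p.num + q.num : ℤ) : ℚ) / ((p.den + q.den : ℕ) : ℚ)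

/-- Insert between every pair of consecutive entries of a list their mediant. -/
def insertMediants : List ℚ → List ℚ
  | [] => []
  | [p] => [p]
  | p :: q :: rest => p :: mediant p q :: insertMediants (q :: rest)

/-- The sequences of the tree `T(r, s)`: `S r s 0 = [r, s]`, and each successive
sequence is obtained by inserting mediants between consecutive entries. -/
def S (r s : ℚ) : ℕ → List ℚ
  | 0 => [r, s]
  | n + 1 => insertMediants (S r s n)

namespace CrossDet

def det (p q : ℚ) : ℤ := (p.den : ℤ) * q.num - p.num * q.den

lemma det_pos_iff {p q : ℚ} : 0 < det p q ↔ p < q := by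
  rw [det, Rat.lt_iff, sub_pos, mul_comm ((p.den : ℤ)) q.num]

lemma det_nonneg_iff {p q : ℚ} : 0 ≤ det p q ↔ p ≤ q := by
  rw [det, Rat.le_iff, sub_nonneg, mul_comm ((p.den : ℤ)) q.num]

lemma mediant_spec (p q : ℚ) : ∃ g : ℤ, 0 < g ∧ (mediant p q).num * g = p.num + q.num ∧
    ((mediant p q).den : ℤ) * g = (p.den : ℤ) + q.den := by
  set m := mediant p q with hmdef
  have hB : (0:ℤ) < (p.den : ℤ) + q.den := by positivity
  have hm : m = Rat.divInt (p.num + q.num) ((p.den : ℤ) + q.den) := by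
    rw [Rat.divInt_eq_div, hmdef, mediant]
    push_cast
    ring
  have hm2 : Rat.divInt (p.num + q.num) ((p.den : ℤ) + q.den) = Rat.divInt m.num m.den := by
    rw [← hm, Rat.num_divInt_den]
  have key : (p.num + q.num) * (m.den : ℤ) = m.num * ((p.den : ℤ) + q.den) :=
    (Rat.divInt_eq_divInt_iff hB.ne' (by exact_mod_cast m.den_nz)).mp hm2
  have hcop : IsCoprime (m.den : ℤ) m.num := by
    rw [Int.isCoprime_iff_gcd_eq_one, Int.gcd, Int.natAbs_natCast, Nat.gcd_comm]
    exact m.reduced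
  have hdvd : (m.den : ℤ) ∣ (p.den : ℤ) + q.den := by
    refine hcop.dvd_of_dvd_mul_left ⟨p.num + q.num, ?_⟩
    rw [← key]; ring
  obtain ⟨g, hg⟩ := hdvd
  have hmden : (0:ℤ) < (m.den : ℤ) := by exact_mod_cast m.pos
  have hgpos : 0 < g := by nlinarith
  refine ⟨g, hgpos, ?_, hg.symm⟩
  have : (p.num + q.num) * (m.den : ℤ) = m.num * g * (m.den : ℤ) := by
    rw [key, hg]; ring
  have := mul_right_cancel₀ hmden.ne' this
  linarith

lemma not_two_dvd_both (p : ℚ) : ¬((2:ℤ) ∣ p.num ∧ (2:ℤ) ∣ (p.den : ℤ)) := by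
  rintro ⟨h1, h2⟩
  have h1' : (2:ℕ) ∣ p.num.natAbs := by
    have := Int.natAbs_dvd_natAbs.mpr h1
    simpa using this
  have h2' : (2:ℕ) ∣ p.den := by exact_mod_cast h2
  have := Nat.dvd_gcd h1' h2'
  rw [p.reduced] at this
  omega

lemma parity {p q : ℚ} (h : 2 ∣ det p q) :
    2 ∣ (p.num + q.num) ∧ 2 ∣ ((p.den : ℤ) + q.den) := by
  have key : ∀ a b c d : ZMod 2, b * c - a * d = 0 → ¬(a = 0 ∧ b = 0) → ¬(c = 0 ∧ d = 0) →
      a + c = 0 ∧ b + d = 0 := by decide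
  have hmod : ((p.den : ℤ) : ZMod 2) * ((q.num : ℤ) : ZMod 2)
      - ((p.num : ℤ) : ZMod 2) * (((q.den : ℤ)) : ZMod 2) = 0 := by
    have h0 := (ZMod.intCast_zmod_eq_zero_iff_dvd (det p q) 2).mpr h
    rw [det] at h0
    push_cast at h0 ⊢
    linear_combination h0
  have hp : ¬(((p.num : ℤ) : ZMod 2) = 0 ∧ (((p.den : ℤ)) : ZMod 2) = 0) := by
    rintro ⟨h1, h2⟩
    rw [ZMod.intCast_zmod_eq_zero_iff_dvd] at h1 h2
    exact not_two_dvd_both p ⟨by exact_mod_cast h1, by exact_mod_cast h2⟩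
  have hq : ¬(((q.num : ℤ) : ZMod 2) = 0 ∧ (((q.den : ℤ)) : ZMod 2) = 0) := by
    rintro ⟨h1, h2⟩
    rw [ZMod.intCast_zmod_eq_zero_iff_dvd] at h1 h2
    exact not_two_dvd_both q ⟨by exact_mod_cast h1, by exact_mod_cast h2⟩
  obtain ⟨e1, e2⟩ := key _ _ _ _ hmod hp hq
  constructor
  · rw [show (2:ℤ) = ((2:ℕ):ℤ) by norm_num, ← ZMod.intCast_zmod_eq_zero_iff_dvd]
    push_cast
    exact e1
  · rw [show (2:ℤ) = ((2:ℕ):ℤ) by norm_num, ← ZMod.intCast_zmod_eq_zero_iff_dvd]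
    push_cast
    exact e2

lemma even_g {p q : ℚ} {g : ℤ} (hnum : (mediant p q).num * g = p.num + q.num)
    (hden : ((mediant p q).den : ℤ) * g = (p.den : ℤ) + q.den) (h : 2 ∣ det p q) : 2 ∣ g := by
  obtain ⟨h1, h2⟩ := parity h
  by_contra hg
  rw [← hnum] at h1
  rw [← hden] at h2
  have d1 : (2:ℤ) ∣ (mediant p q).num := ((Int.prime_two.dvd_mul).mp h1).resolve_right hg
  have d2 : (2:ℤ) ∣ ((mediant p q).den : ℤ) := ((Int.prime_two.dvd_mul).mp h2).resolve_right hg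
  exact not_two_dvd_both _ ⟨d1, d2⟩

lemma step_dvd {D D' g : ℤ} {e : ℕ} (hD : 0 < D) (hdvd : D ∣ 2 ^ e) (hDg : D' * g = D)
    (hg : 0 < g) (heven : 2 ∣ D → 2 ∣ g) : 0 < D' ∧ D' ∣ 2 ^ (e - 1) := by
  have hD'pos : 0 < D' := by nlinarith
  refine ⟨hD'pos, ?_⟩
  by_cases h2 : (2:ℤ) ∣ D
  · obtain ⟨t, ht⟩ := heven h2
    have he : e ≠ 0 := by
      rintro rfl
      have := Int.le_of_dvd one_pos hdvd
      obtain ⟨u, hu⟩ := h2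
      omega
    obtain ⟨e', rfl⟩ : ∃ e', e = e' + 1 := ⟨e - 1, by omega⟩
    have hmain : 2 * D' ∣ 2 * 2 ^ e' := by
      have hDD : 2 * D' ∣ D := ⟨t, by rw [← hDg, ht]; ring⟩
      refine hDD.trans ?_
      rw [pow_succ] at hdvd
      rw [mul_comm]
      exact hdvd
    have := (mul_dvd_mul_iff_left (by norm_num : (2:ℤ) ≠ 0)).mp hmain
    simpa using this
  · have hna : D.natAbs ∣ 2 ^ e := by
      have := Int.natAbs_dvd_natAbs.mpr hdvd
      simpa [Int.natAbs_pow] using this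
    have hcop : Nat.Coprime D.natAbs 2 := by
      exact ((Nat.prime_two.coprime_iff_not_dvd).mpr (by omega)).symm
    have hD1 : D.natAbs = 1 := Nat.Coprime.eq_one_of_dvd (hcop.pow_right e) hna
    have hD1' : D = 1 := by omega
    have : D' ∣ D := ⟨g, hDg.symm⟩
    rw [hD1'] at this
    exact this.trans (one_dvd _)

end CrossDet
namespace CrossDet

lemma insertMediants_cons (p : ℚ) (l : List ℚ) : ∃ t, insertMediants (p :: l) = p :: t := by
  cases l with
  | nil => exact ⟨[], rfl⟩
  | cons q rest => exact ⟨_, rfl⟩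

lemma insertMediants_getLast? : ∀ l : List ℚ, (insertMediants l).getLast? = l.getLast? := by
  intro l
  induction l with
  | nil => rfl
  | cons p tl ih =>
    cases tl with
    | nil => rfl
    | cons q rest =>
      obtain ⟨t, ht⟩ := insertMediants_cons q rest
      show (p :: mediant p q :: insertMediants (q :: rest)).getLast? = _
      rw [List.getLast?_cons_cons, ht, List.getLast?_cons_cons, ← ht, ih,
        List.getLast?_cons_cons]

lemma mem_insertMediants {x : ℚ} : ∀ l : List ℚ, x ∈ l → x ∈ insertMediants l := by
  intro l
  induction l with
  | nil => exact fun h => h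
  | cons p tl ih =>
    cases tl with
    | nil => exact fun h => h
    | cons q rest =>
      intro h
      show x ∈ p :: mediant p q :: insertMediants (q :: rest)
      rcases List.mem_cons.mp h with h | h
      · exact h ▸ List.mem_cons_self
      · exact List.mem_cons_of_mem _ (List.mem_cons_of_mem _ (ih h))

lemma insertMediants_append : ∀ (l1 : List ℚ) (x : ℚ) (l2 : List ℚ), l1.getLast? = some x →
    insertMediants (l1 ++ l2) = insertMediants l1 ++ (insertMediants (x :: l2)).tail := by
  intro l1
  induction l1 with
  | nil => intro x l2 h; simp at h
  | cons p tl ih =>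
    cases tl with
    | nil =>
      intro x l2 h
      simp only [List.getLast?_singleton, Option.some.injEq] at h
      subst h
      obtain ⟨t, ht⟩ := insertMediants_cons p l2
      show insertMediants (p :: l2) = insertMediants [p] ++ (insertMediants (p :: l2)).tail
      rw [ht]
      rfl
    | cons q rest =>
      intro x l2 h
      rw [List.getLast?_cons_cons] at h
      have hrec := ih x l2 h
      show insertMediants (p :: q :: (rest ++ l2)) = _
      have : insertMediants (p :: q :: (rest ++ l2))
          = p :: mediant p q :: insertMediants (q :: (rest ++ l2)) := rfl
      rw [this, show (q :: (rest ++ l2)) = (q :: rest) ++ l2 from rfl, hrec]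
      rfl

lemma S_cons (r s : ℚ) : ∀ n, ∃ t, S r s n = r :: t := by
  intro n
  induction n with
  | zero => exact ⟨[s], rfl⟩
  | succ n ih =>
    obtain ⟨t, ht⟩ := ih
    show ∃ t', insertMediants (S r s n) = r :: t'
    rw [ht]
    exact insertMediants_cons r t

lemma S_getLast? (r s : ℚ) : ∀ n, (S r s n).getLast? = some s := by
  intro n
  induction n with
  | zero => rfl
  | succ n ih =>
    show (insertMediants (S r s n)).getLast? = some s
    rw [insertMediants_getLast?, ih]

lemma S_glue (p q : ℚ) : ∀ n, S p q (n + 1) =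
    S p (mediant p q) n ++ (S (mediant p q) q n).tail := by
  intro n
  induction n with
  | zero => rfl
  | succ n ih =>
    have hlast := S_getLast? p (mediant p q) n
    obtain ⟨t, ht⟩ := S_cons (mediant p q) q n
    calc S p q (n + 2) = insertMediants (S p q (n + 1)) := rfl
      _ = insertMediants (S p (mediant p q) n ++ (S (mediant p q) q n).tail) := by rw [ih]
      _ = insertMediants (S p (mediant p q) n)
            ++ (insertMediants (mediant p q :: (S (mediant p q) q n).tail)).tail :=
        insertMediants_append _ _ _ hlast
      _ = S p (mediant p q) (n + 1) ++ (S (mediant p q) q (n + 1)).tail := by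
        rw [show mediant p q :: (S (mediant p q) q n).tail = S (mediant p q) q n by
          rw [ht]; rfl]
        rfl

lemma S_mem_succ {r s x : ℚ} {n : ℕ} (h : x ∈ S r s n) : x ∈ S r s (n + 1) :=
  mem_insertMediants _ h

lemma S_mem_le {r s x : ℚ} {n n' : ℕ} (hle : n ≤ n') (h : x ∈ S r s n) : x ∈ S r s n' := by
  induction n' with
  | zero => exact (Nat.le_zero.mp hle) ▸ h
  | succ m ih =>
    rcases Nat.lt_or_ge n (m + 1) with hlt | hge
    · exact S_mem_succ (ih (by omega))
    · have : n = m + 1 := by omega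
      exact this ▸ h

lemma mem_S_left {p q x : ℚ} {n : ℕ} (h : x ∈ S p (mediant p q) n) : x ∈ S p q (n + 1) := by
  rw [S_glue]
  exact List.mem_append_left _ h

lemma mem_S_right {p q x : ℚ} {n : ℕ} (h : x ∈ S (mediant p q) q n) : x ∈ S p q (n + 1) := by
  obtain ⟨t, ht⟩ := S_cons (mediant p q) q n
  rw [ht] at h
  rcases List.mem_cons.mp h with rfl | h
  · refine S_mem_le (Nat.one_le_iff_ne_zero.mpr (by omega)) ?_
    show mediant p q ∈ [p, mediant p q, q]
    simp
  · rw [S_glue]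
    refine List.mem_append_right _ ?_
    rw [ht]
    exact h

end CrossDet
namespace CrossDet

lemma chain_insert (e : ℕ) : ∀ l : List ℚ,
    l.Chain' (fun p q => 0 < det p q ∧ det p q ∣ 2 ^ e) →
    (insertMediants l).Chain' (fun p q => 0 < det p q ∧ det p q ∣ 2 ^ (e - 1)) := by
  intro l
  induction l with
  | nil => intro _; exact List.isChain_nil
  | cons p tl ih =>
    cases tl with
    | nil => intro _; exact List.isChain_singleton _
    | cons q rest =>
      intro h
      rw [List.Chain', List.isChain_cons_cons] at h
      obtain ⟨⟨hDpos, hDdvd⟩, hch⟩ := h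
      have ih' := ih hch
      obtain ⟨g, hg, hnum, hden⟩ := mediant_spec p q
      have h1 : det p (mediant p q) * g = det p q := by
        rw [det, det]; linear_combination (p.den : ℤ) * hnum - p.num * hden
      have h2 : det (mediant p q) q * g = det p q := by
        rw [det, det]; linear_combination q.num * hden - (q.den : ℤ) * hnum
      have heg : 2 ∣ det p q → 2 ∣ g := fun h2d => even_g hnum hden h2d
      have r1 := step_dvd hDpos hDdvd h1 hg heg
      have r2 := step_dvd hDpos hDdvd h2 hg heg
      obtain ⟨t, ht⟩ := insertMediants_cons q rest
      show List.IsChain _ (p :: mediant p q :: insertMediants (q :: rest))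
      rw [List.isChain_cons_cons, ht, List.isChain_cons_cons]
      exact ⟨r1, r2, ht ▸ ih'⟩

lemma chain_S {r s : ℚ} {k : ℕ} (h0 : 0 < det r s) (hdvd : det r s ∣ 2 ^ k) :
    ∀ n, (S r s n).Chain' (fun p q => 0 < det p q ∧ det p q ∣ 2 ^ (k - n)) := by
  intro n
  induction n with
  | zero => exact List.isChain_cons_cons.mpr ⟨⟨h0, hdvd⟩, List.isChain_singleton _⟩
  | succ n ih =>
    have h := chain_insert (k - n) _ ih
    rw [show k - n - 1 = k - (n + 1) by omega] at h
    exact h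

lemma mem_tree : ∀ N : ℕ, ∀ p q x : ℚ, 0 < det p q → p ≤ x → x ≤ q →
    (det x q + det p x).toNat ≤ N → ∃ n, x ∈ S p q n := by
  intro N
  induction N with
  | zero =>
    intro p q x hD hpx hxq hμ
    rcases eq_or_lt_of_le hpx with h | h
    · exact ⟨0, by rw [← h]; show p ∈ [p, q]; simp⟩
    rcases eq_or_lt_of_le hxq with h' | h'
    · exact ⟨0, by rw [h']; show q ∈ [p, q]; simp⟩
    have hβ := det_pos_iff.mpr h
    have hα := det_pos_iff.mpr h'
    omega
  | succ N ih =>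
    intro p q x hD hpx hxq hμ
    rcases eq_or_lt_of_le hpx with h | h
    · exact ⟨0, by rw [← h]; show p ∈ [p, q]; simp⟩
    rcases eq_or_lt_of_le hxq with h' | h'
    · exact ⟨0, by rw [h']; show q ∈ [p, q]; simp⟩
    have hβ := det_pos_iff.mpr h
    have hα := det_pos_iff.mpr h'
    obtain ⟨g, hg, hnum, hden⟩ := mediant_spec p q
    have h1 : det p (mediant p q) * g = det p q := by
      rw [det, det]; linear_combination (p.den : ℤ) * hnum - p.num * hden
    have h2 : det (mediant p q) q * g = det p q := by
      rw [det, det]; linear_combination q.num * hden - (q.den : ℤ) * hnum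
    have hpm : 0 < det p (mediant p q) := by nlinarith
    have hmq : 0 < det (mediant p q) q := by nlinarith
    rcases le_total x (mediant p q) with hxm | hmx
    · have hα' : det x (mediant p q) * g = det x q - det p x := by
        rw [det, det, det]; linear_combination (x.den : ℤ) * hnum - x.num * hden
      have hα'0 : 0 ≤ det x (mediant p q) := det_nonneg_iff.mpr hxm
      have hle : det x (mediant p q) ≤ det x (mediant p q) * g :=
        le_mul_of_one_le_right hα'0 (by omega)
      have hμ' : (det x (mediant p q) + det p x).toNat ≤ N := by omega
      obtain ⟨n, hn⟩ := ih p (mediant p q) x hpm hpx hxm hμ'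
      exact ⟨n + 1, mem_S_left hn⟩
    · have hβ' : det (mediant p q) x * g = det p x - det x q := by
        rw [det, det, det]; linear_combination x.num * hden - (x.den : ℤ) * hnum
      have hβ'0 : 0 ≤ det (mediant p q) x := det_nonneg_iff.mpr hmx
      have hle : det (mediant p q) x ≤ det (mediant p q) x * g :=
        le_mul_of_one_le_right hβ'0 (by omega)
      have hμ' : (det x q + det (mediant p q) x).toNat ≤ N := by omega
      obtain ⟨n, hn⟩ := ih (mediant p q) q x hmq hmx hxq hμ'
      exact ⟨n + 1, mem_S_right hn⟩

end CrossDet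


/-- If `a/b` and `c/d` are nonnegative fractions in lowest terms whose cross-determinant
`bc - ad` is a power of two, then (i) every rational `x` with `a/b ≤ x ≤ c/d` appears in
the tree `T(a/b, c/d)`, and (ii) from some row `L` on, every pair of consecutive entries
has cross-determinant `1`. -/
theorem appears_of_crossDeterminant_pow_two (a b c d : ℕ) (hb : 0 < b) (hd : 0 < d)
    (hab : Nat.gcd a b = 1) (hcd : Nat.gcd c d = 1)
    (k : ℕ) (hdet : (b : ℤ) * c - a * d = 2 ^ k) :
    (∀ x : ℚ, (a : ℚ) / b ≤ x → x ≤ (c : ℚ) / d →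
      ∃ n, x ∈ S ((a : ℚ) / b) ((c : ℚ) / d) n) ∧
    (∃ L, ∀ n, L ≤ n → ∀ j, (hj : j + 1 < (S ((a : ℚ) / b) ((c : ℚ) / d) n).length) →
      ((S ((a : ℚ) / b) ((c : ℚ) / d) n)[j].den : ℤ) *
          (S ((a : ℚ) / b) ((c : ℚ) / d) n)[j + 1].num -
        (S ((a : ℚ) / b) ((c : ℚ) / d) n)[j].num *
          ((S ((a : ℚ) / b) ((c : ℚ) / d) n)[j + 1].den : ℤ) = 1) := by
  set r : ℚ := (a : ℚ) / b with hrdef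
  set s : ℚ := (c : ℚ) / d with hsdef
  have hbz : (0 : ℤ) < (b : ℤ) := by exact_mod_cast hb
  have hdz : (0 : ℤ) < (d : ℤ) := by exact_mod_cast hd
  have hrcast : r = ((a : ℤ) : ℚ) / ((b : ℤ) : ℚ) := by rw [hrdef]; push_cast; ring
  have hscast : s = ((c : ℤ) : ℚ) / ((d : ℤ) : ℚ) := by rw [hsdef]; push_cast; ring
  have hra : r.num = (a : ℤ) := by
    rw [hrcast]; exact Rat.num_div_eq_of_coprime hbz (by simpa using hab)
  have hrb : (r.den : ℤ) = (b : ℤ) := by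
    rw [hrcast]; exact Rat.den_div_eq_of_coprime hbz (by simpa using hab)
  have hsc : s.num = (c : ℤ) := by
    rw [hscast]; exact Rat.num_div_eq_of_coprime hdz (by simpa using hcd)
  have hsd : (s.den : ℤ) = (d : ℤ) := by
    rw [hscast]; exact Rat.den_div_eq_of_coprime hdz (by simpa using hcd)
  have hdetrs : CrossDet.det r s = 2 ^ k := by
    rw [CrossDet.det, hra, hrb, hsc, hsd]; exact hdet
  have hdpos : 0 < CrossDet.det r s := by rw [hdetrs]; positivity
  constructor
  · intro x hrx hxs
    exact CrossDet.mem_tree ((CrossDet.det x s + CrossDet.det r x).toNat) r s x hdpos hrx hxs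
      le_rfl
  · refine ⟨k, fun n hn j hj => ?_⟩
    have hch := CrossDet.chain_S hdpos (by rw [hdetrs]) n
    rw [List.Chain', List.isChain_iff_getElem] at hch
    obtain ⟨hpos, hdvd1⟩ := hch j (by omega)
    rw [show k - n = 0 by omega, pow_zero] at hdvd1
    have hle := Int.le_of_dvd one_pos hdvd1
    have h1 : CrossDet.det ((S r s n).get ⟨j, by rw [hrdef, hsdef]; omega⟩) ((S r s n).get ⟨j + 1, by rw [hrdef, hsdef]; omega⟩)
        = 1 := by simp only [List.get_eq_getElem]; omega
    rw [CrossDet.det] at h1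
    simpa [List.get_eq_getElem] using h1
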